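/- The proof system L′_C (propositional tautologies, modus ponens, and axioms A1–A7) is strongly complete for the language L′_C with respect to recursive causal models: for every set Γ ∪ {γ} of L′_C formulas, if every recursive causal model satisfying all formulas of Γ satisfies γ, then Γ proves γ in L′_C. -/

import Mathlib

open Classical

/-- A finite signature: variables sorted into exogenous and endogenous, each with a
finite nonempty range of values. -/
structure Sig : Type 1 where
  Var : Type
  exo : Var → Prop
  Val : Var → Type
  [decEqVar : DecidableEq Var]
  [finVar : Fintype Var]
  [neVar : Nonempty Var]
  [decEqVal : ∀ X : Var, DecidableEq (Val X)]
  [finVal : ∀ X : Var, Fintype (Val X)]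
  [neVal : ∀ X : Var, Nonempty (Val X)]

attribute [instance] Sig.decEqVar Sig.finVar Sig.neVar Sig.decEqVal Sig.finVal Sig.neVal

variable {S : Sig}

/-- A valuation: a value for each variable. -/
abbrev Env (S : Sig) : Type := ∀ X : S.Var, S.Val X

instance : Nonempty (Env S) := ⟨fun X => Classical.arbitrary (S.Val X)⟩

/-- Values for all variables other than `V`. -/
abbrev Others (S : Sig) (V : S.Var) : Type := ∀ X : {X : S.Var // X ≠ V}, S.Val X.val

/-- The restriction of a valuation to the variables other than `V`. -/
def Env.restrict (A : Env S) (V : S.Var) : Others S V := fun X => A X.val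

/-- A family of structural functions (only the components at endogenous variables
are meaningful). -/
abbrev StructFuns (S : Sig) : Type := ∀ V : S.Var, Others S V → S.Val V

/-- A valuation complies with the structural functions: the value of each endogenous
variable is obtained by applying its structural function to the values of all
other variables. -/
def Complies (F : StructFuns S) (A : Env S) : Prop :=
  ∀ V : S.Var, ¬ S.exo V → A V = F V (A.restrict V)

/-- The endogenous variable `V` is directly causally affected by `X` under `F`. -/
def DirAff (F : StructFuns S) (X V : S.Var) : Prop :=
  ¬ S.exo V ∧ ∃ (h : X ≠ V) (g : Others S V) (x₁ x₂ : S.Val X),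
    x₁ ≠ x₂ ∧
      F V (Function.update g ⟨X, h⟩ x₁) ≠ F V (Function.update g ⟨X, h⟩ x₂)

/-- `F` is recursive: the transitive closure of the direct causal dependence
relation is asymmetric (transitivity is automatic for `Relation.TransGen`). -/
def RecursiveF (F : StructFuns S) : Prop :=
  ∀ a b : S.Var, Relation.TransGen (DirAff F) a b → ¬ Relation.TransGen (DirAff F) b a

/-- An assignment of values to a set of pairwise distinct variables. -/
abbrev Intervention (S : Sig) : Type := ∀ X : S.Var, Option (S.Val X)

/-- The empty assignment. -/
def iEmpty (S : Sig) : Intervention S := fun _ => none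

/-- Extend an assignment by additionally setting `Y` to `y` (overriding). -/
def iUpd (I : Intervention S) (Y : S.Var) (y : S.Val Y) : Intervention S :=
  Function.update I Y (some y)

/-- Combine assignments, the second overriding the first:  `[X⃗ := x⃗, Y⃗ := y⃗]`. -/
def icomp (I J : Intervention S) : Intervention S := fun W =>
  match J W with
  | some v => some v
  | none => I W

/-- The intervened family of structural functions: intervened variables get the
constant function returning the assigned value; the rest are unchanged. -/
def intF (F : StructFuns S) (I : Intervention S) : StructFuns S :=
  fun V g => (I V).getD (F V g)

/-- `A'` is the result of intervening with `I` on the valuation `A` (w.r.t. `F`):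
exogenous intervened variables get the assigned value, exogenous non-intervened
variables keep their value, and each endogenous variable complies with its new
structural function. -/
def IntervenedVal (F : StructFuns S) (A : Env S) (I : Intervention S) (A' : Env S) : Prop :=
  (∀ X : S.Var, S.exo X → ∀ v : S.Val X, I X = some v → A' X = v) ∧
  (∀ X : S.Var, S.exo X → I X = none → A' X = A X) ∧
  (∀ V : S.Var, ¬ S.exo V → A' V = intF F I V (A'.restrict V))

/-- The intervened valuation (unique when `F` is recursive). -/
noncomputable def intVal (F : StructFuns S) (A : Env S) (I : Intervention S) : Env S :=
  Classical.epsilon (IntervenedVal F A I)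

/-- The language L_C: atoms `Y = y`, negation, conjunction, interventionist
counterfactual operators. -/
inductive Form (S : Sig) : Type where
  | eq (Y : S.Var) (y : S.Val Y) : Form S
  | neg (φ : Form S) : Form S
  | conj (φ ψ : Form S) : Form S
  | int (I : Intervention S) (φ : Form S) : Form S

namespace Form

/-- Material implication, defined from `¬` and `∧` as usual. -/
def impl (φ ψ : Form S) : Form S := Form.neg (Form.conj φ (Form.neg ψ))

/-- Disjunction, defined from `¬` and `∧` as usual. -/
def orF (φ ψ : Form S) : Form S := Form.neg (Form.conj (Form.neg φ) (Form.neg ψ))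

/-- Biconditional. -/
def iffF (φ ψ : Form S) : Form S := Form.conj (impl φ ψ) (impl ψ φ)

end Form

/-- A canonical contradiction. -/
noncomputable def botF (S : Sig) : Form S :=
  let X : S.Var := Classical.arbitrary S.Var
  let x : S.Val X := Classical.arbitrary (S.Val X)
  Form.conj (Form.eq X x) (Form.neg (Form.eq X x))

/-- A canonical tautology. -/
noncomputable def topF (S : Sig) : Form S := Form.neg (botF S)

/-- Disjunction of a list of formulas (the empty disjunction is a contradiction). -/
noncomputable def bigOr : List (Form S) → Form S
  | [] => botF S
  | φ :: l => l.foldl Form.orF φ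

/-- Conjunction of a list of formulas (the empty conjunction is a tautology). -/
noncomputable def bigConj : List (Form S) → Form S
  | [] => topF S
  | φ :: l => l.foldl Form.conj φ

/-- `φ` is an instance of a propositional tautology: it evaluates to `true` under
every Boolean valuation that respects negation and conjunction (treating all
other formulas as atoms). -/
def Tauto (φ : Form S) : Prop :=
  ∀ v : Form S → Bool,
    (∀ ψ : Form S, v (Form.neg ψ) = !(v ψ)) →
    (∀ ψ χ : Form S, v (Form.conj ψ χ) = (v ψ && v χ)) →
    v φ = true

/-- The assignment `[Z⃗ := z⃗, X := x]` where `Z⃗` lists all variables other than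
`X` and `V`, used in the formula `X ⇝ V`. -/
def ltInt (X V : S.Var) (g : ∀ W : {W : S.Var // W ≠ X ∧ W ≠ V}, S.Val W.val)
    (x : S.Val X) : Intervention S := fun W =>
  if h : W = X then some (h.symm ▸ x)
  else if h' : W = V then none
  else some (g ⟨W, ⟨h, h'⟩⟩)

/-- The formula `X ⇝ V`: the disjunction, over tuples `z⃗` of values for all
variables other than `X` and `V`, distinct values `x₁ ≠ x₂` of `X` and distinct
values `v₁ ≠ v₂` of `V`, of `[Z⃗:=z⃗, X:=x₁]V=v₁ ∧ [Z⃗:=z⃗, X:=x₂]V=v₂`. -/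
noncomputable def leadsTo (X V : S.Var) : Form S :=
  bigOr ((Finset.univ.filter
      (fun p : (∀ W : {W : S.Var // W ≠ X ∧ W ≠ V}, S.Val W.val) ×
          (S.Val X × S.Val X) × (S.Val V × S.Val V) =>
        p.2.1.1 ≠ p.2.1.2 ∧ p.2.2.1 ≠ p.2.2.2)).toList.map
    (fun p =>
      Form.conj
        (Form.int (ltInt X V p.1 p.2.1.1) (Form.eq V p.2.2.1))
        (Form.int (ltInt X V p.1 p.2.1.2) (Form.eq V p.2.2.2))))

/-- The chain `X₀ ⇝ X₁ ∧ ⋯ ∧ X_k ⇝ X_{k+1}`. -/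
noncomputable def chainConj (X : ℕ → S.Var) : ℕ → Form S
  | 0 => leadsTo (X 0) (X 1)
  | n + 1 => Form.conj (chainConj X n) (leadsTo (X (n + 1)) (X (n + 2)))

/-- `ψ₁ → (ψ₂ → ⋯ → (ψₙ → φ))` for a list of premises. -/
def impsFrom : List (Form S) → Form S → Form S
  | [], φ => φ
  | ψ :: l, φ => Form.impl ψ (impsFrom l φ)

/-- Satisfaction of an L_C formula in a causal model `⟨F, A⟩`. -/
def SatC : Form S → StructFuns S → Env S → Prop
  | Form.eq Y y, _, A => A Y = y
  | Form.neg φ, F, A => ¬ SatC φ F A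
  | Form.conj φ ψ, F, A => SatC φ F A ∧ SatC ψ F A
  | Form.int I φ, F, A => SatC φ (intF F I) (intVal F A I)

/-- The proof system L′_C: propositional tautologies, modus ponens, and the
axiom schemes A1–A7. -/
inductive ThmC' : Form S → Prop where
  | taut : ∀ {φ : Form S}, Tauto φ → ThmC' φ
  | mp : ∀ {φ ψ : Form S}, ThmC' (Form.impl φ ψ) → ThmC' φ → ThmC' ψ
  | a1 : ∀ (I : Intervention S) (Y : S.Var) (y y' : S.Val Y), y ≠ y' →
      ThmC' (Form.impl (Form.int I (Form.eq Y y)) (Form.neg (Form.int I (Form.eq Y y'))))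
  | a2 : ∀ (I : Intervention S) (Y : S.Var),
      ThmC' (bigOr (((Finset.univ : Finset (S.Val Y)).toList).map
        (fun y => Form.int I (Form.eq Y y))))
  | a3 : ∀ (I : Intervention S) (Y Z : S.Var) (y : S.Val Y) (z : S.Val Z),
      ThmC' (Form.impl (Form.conj (Form.int I (Form.eq Y y)) (Form.int I (Form.eq Z z)))
        (Form.int (iUpd I Y y) (Form.eq Z z)))
  | a4 : ∀ (I : Intervention S) (Y : S.Var) (y : S.Val Y),
      ThmC' (Form.int (iUpd I Y y) (Form.eq Y y))
  | a5 : ∀ (I : Intervention S) (Y Z : S.Var) (y : S.Val Y) (z : S.Val Z), Y ≠ Z →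
      ThmC' (Form.impl
        (Form.conj (Form.int (iUpd I Y y) (Form.eq Z z)) (Form.int (iUpd I Z z) (Form.eq Y y)))
        (Form.int I (Form.eq Z z)))
  | a6 : ∀ (X : ℕ → S.Var) (k : ℕ),
      (∀ i : ℕ, i ≤ k → X i ≠ X (i + 1)) → X (k + 1) ≠ X 0 →
      ThmC' (Form.impl (chainConj X k) (Form.neg (leadsTo (X (k + 1)) (X 0))))
  | a7 : ∀ (I : Intervention S) (U : S.Var) (u : S.Val U), S.exo U → I U = none →
      ThmC' (Form.iffF (Form.int (iEmpty S) (Form.eq U u)) (Form.int I (Form.eq U u)))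

/-- Strong derivability from a set of premises in L′_C. -/
def ProvC' (Γ : Set (Form S)) (φ : Form S) : Prop :=
  ∃ l : List (Form S), (∀ ψ ∈ l, ψ ∈ Γ) ∧ ThmC' (impsFrom l φ)

/-- The language L′_C: Boolean combinations of formulas `[X⃗:=x⃗]Y=y`. -/
inductive IsC' : Form S → Prop where
  | intEq : ∀ (I : Intervention S) (Y : S.Var) (y : S.Val Y),
      IsC' (Form.int I (Form.eq Y y))
  | neg : ∀ {φ : Form S}, IsC' φ → IsC' (Form.neg φ)
  | conj : ∀ {φ ψ : Form S}, IsC' φ → IsC' ψ → IsC' (Form.conj φ ψ)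

section Aux

attribute [local instance] Classical.propDecidable

variable {S : Sig}

/-- Boolean extension of an atomic assignment to all formulas. -/
def ext (β : ∀ (I : Intervention S) (Y : S.Var), S.Val Y → Bool) : Form S → Bool
  | Form.eq _ _ => true
  | Form.neg φ => !(ext β φ)
  | Form.conj φ ψ => ext β φ && ext β ψ
  | Form.int I (Form.eq Y y) => β I Y y
  | Form.int _ (Form.neg _) => true
  | Form.int _ (Form.conj _ _) => true
  | Form.int _ (Form.int _ _) => true

lemma ext_neg (β) (ψ : Form S) : ext β (Form.neg ψ) = !(ext β ψ) := rfl
lemma ext_conj (β) (ψ χ : Form S) : ext β (Form.conj ψ χ) = (ext β ψ && ext β χ) := rfl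
lemma ext_intEq (β) (I : Intervention S) (Y : S.Var) (y : S.Val Y) :
    ext β (Form.int I (Form.eq Y y)) = β I Y y := rfl

section VLemmas

variable (v : Form S → Bool)
    (hneg : ∀ ψ : Form S, v (Form.neg ψ) = !(v ψ))
    (hconj : ∀ ψ χ : Form S, v (Form.conj ψ χ) = (v ψ && v χ))

include hneg hconj

lemma v_impl (a b : Form S) : v (Form.impl a b) = true ↔ (v a = true → v b = true) := by
  simp only [Form.impl, hneg, hconj]
  cases v a <;> cases v b <;> simp

lemma v_orF (a b : Form S) : v (Form.orF a b) = true ↔ (v a = true ∨ v b = true) := by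
  simp only [Form.orF, hneg, hconj]
  cases v a <;> cases v b <;> simp

lemma v_iffF (a b : Form S) : v (Form.iffF a b) = true ↔ (v a = true ↔ v b = true) := by
  simp only [Form.iffF, Form.impl, hconj, hneg]
  cases v a <;> cases v b <;> simp

lemma v_botF : v (botF S) = false := by
  simp only [botF]
  rw [hconj, hneg]
  simp

lemma v_foldl_orF (l : List (Form S)) (φ : Form S) :
    v (l.foldl Form.orF φ) = true ↔ (v φ = true ∨ ∃ ψ ∈ l, v ψ = true) := by
  induction l generalizing φ with
  | nil => simp
  | cons a l ih =>
    rw [List.foldl_cons, ih, v_orF v hneg hconj]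
    constructor
    · rintro ((h | h) | ⟨ψ, hm, hv⟩)
      · exact Or.inl h
      · exact Or.inr ⟨a, List.mem_cons_self, h⟩
      · exact Or.inr ⟨ψ, List.mem_cons_of_mem a hm, hv⟩
    · rintro (h | ⟨ψ, hm, hv⟩)
      · exact Or.inl (Or.inl h)
      · rcases List.mem_cons.1 hm with rfl | hm
        · exact Or.inl (Or.inr hv)
        · exact Or.inr ⟨ψ, hm, hv⟩

lemma v_bigOr (l : List (Form S)) : v (bigOr l) = true ↔ ∃ ψ ∈ l, v ψ = true := by
  cases l with
  | nil => simp [bigOr, v_botF v hneg hconj]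
  | cons a l =>
    rw [bigOr, v_foldl_orF v hneg hconj]
    constructor
    · rintro (h | ⟨ψ, hm, hv⟩)
      · exact ⟨a, List.mem_cons_self, h⟩
      · exact ⟨ψ, List.mem_cons_of_mem a hm, hv⟩
    · rintro ⟨ψ, hm, hv⟩
      rcases List.mem_cons.1 hm with rfl | hm
      · exact Or.inl hv
      · exact Or.inr ⟨ψ, hm, hv⟩

lemma v_impsFrom (l : List (Form S)) (φ : Form S) :
    v (impsFrom l φ) = true ↔ ((∀ ψ ∈ l, v ψ = true) → v φ = true) := by
  induction l with
  | nil => simp [impsFrom]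
  | cons a l ih =>
    rw [impsFrom, v_impl v hneg hconj, ih]
    constructor
    · intro h hall
      exact h (hall a (List.mem_cons_self)) fun ψ hm => hall ψ (List.mem_cons_of_mem a hm)
    · intro h ha hall
      refine h fun ψ hm => ?_
      rcases List.mem_cons.1 hm with rfl | hm
      · exact ha
      · exact hall ψ hm

lemma v_leadsTo (X V : S.Var) :
    v (leadsTo X V) = true ↔
      ∃ (g : ∀ W : {W : S.Var // W ≠ X ∧ W ≠ V}, S.Val W.val) (x₁ x₂ : S.Val X)
        (v₁ v₂ : S.Val V), x₁ ≠ x₂ ∧ v₁ ≠ v₂ ∧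
          v (Form.int (ltInt X V g x₁) (Form.eq V v₁)) = true ∧
          v (Form.int (ltInt X V g x₂) (Form.eq V v₂)) = true := by
  rw [leadsTo, v_bigOr v hneg hconj]
  constructor
  · rintro ⟨ψ, hmem, hv⟩
    rw [List.mem_map] at hmem
    obtain ⟨p, hp, rfl⟩ := hmem
    rw [Finset.mem_toList, Finset.mem_filter] at hp
    rw [hconj] at hv
    simp only [Bool.and_eq_true] at hv
    exact ⟨p.1, p.2.1.1, p.2.1.2, p.2.2.1, p.2.2.2, hp.2.1, hp.2.2, hv.1, hv.2⟩
  · rintro ⟨g, x₁, x₂, v₁, v₂, hx, hv12, h1, h2⟩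
    refine ⟨_, List.mem_map.2 ⟨⟨g, ⟨x₁, x₂⟩, ⟨v₁, v₂⟩⟩, ?_, rfl⟩, ?_⟩
    · rw [Finset.mem_toList, Finset.mem_filter]
      exact ⟨Finset.mem_univ _, hx, hv12⟩
    · rw [hconj]
      simp [h1, h2]

lemma v_chainConj (X : ℕ → S.Var) (k : ℕ) :
    v (chainConj X k) = true ↔ ∀ i ≤ k, v (leadsTo (X i) (X (i + 1))) = true := by
  induction k with
  | zero =>
    simp only [chainConj]
    constructor
    · intro h i hi; interval_cases i; exact h
    · intro h; exact h 0 le_rfl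
  | succ n ih =>
    rw [chainConj, hconj]
    simp only [Bool.and_eq_true, ih]
    constructor
    · rintro ⟨h1, h2⟩ i hi
      rcases Nat.lt_or_ge i (n + 1) with h | h
      · exact h1 i (Nat.lt_succ_iff.1 h)
      · have : i = n + 1 := le_antisymm hi h
        subst this; exact h2
    · intro h
      exact ⟨fun i hi => h i (le_trans hi (Nat.le_succ n)), h (n + 1) le_rfl⟩

end VLemmas

end Aux
section Aux2

attribute [local instance] Classical.propDecidable

variable {S : Sig}

/-- Formulas whose value under any homomorphic valuation is determined by the atoms. -/
inductive Det : Form S → Prop where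
  | intEq : ∀ (I : Intervention S) (Y : S.Var) (y : S.Val Y), Det (Form.int I (Form.eq Y y))
  | contra : ∀ (Y : S.Var) (y : S.Val Y), Det (Form.conj (Form.eq Y y) (Form.neg (Form.eq Y y)))
  | neg : ∀ {φ : Form S}, Det φ → Det (Form.neg φ)
  | conj : ∀ {φ ψ : Form S}, Det φ → Det ψ → Det (Form.conj φ ψ)

lemma IsC'.det {φ : Form S} (h : IsC' φ) : Det φ := by
  induction h with
  | intEq I Y y => exact Det.intEq I Y y
  | neg _ ih => exact Det.neg ih
  | conj _ _ ih1 ih2 => exact Det.conj ih1 ih2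

lemma det_impl {a b : Form S} (ha : Det a) (hb : Det b) : Det (Form.impl a b) :=
  Det.neg (Det.conj ha (Det.neg hb))

lemma det_orF {a b : Form S} (ha : Det a) (hb : Det b) : Det (Form.orF a b) :=
  Det.neg (Det.conj (Det.neg ha) (Det.neg hb))

lemma det_iffF {a b : Form S} (ha : Det a) (hb : Det b) : Det (Form.iffF a b) :=
  Det.conj (det_impl ha hb) (det_impl hb ha)

lemma det_botF : Det (botF S) := Det.contra _ _

lemma det_bigOr {l : List (Form S)} (h : ∀ φ ∈ l, Det φ) : Det (bigOr l) := by
  cases l with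
  | nil => exact det_botF
  | cons a l =>
    rw [bigOr]
    have ha : Det a := h a (List.mem_cons_self)
    have hl : ∀ φ ∈ l, Det φ := fun φ hm => h φ (List.mem_cons_of_mem a hm)
    clear h
    induction l generalizing a with
    | nil => exact ha
    | cons b l ih =>
      rw [List.foldl_cons]
      exact ih _ (det_orF ha (hl b (List.mem_cons_self)))
        fun φ hm => hl φ (List.mem_cons_of_mem b hm)

lemma det_leadsTo (X V : S.Var) : Det (leadsTo X V) := by
  refine det_bigOr fun φ hm => ?_
  rw [List.mem_map] at hm
  obtain ⟨p, _, rfl⟩ := hm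
  exact Det.conj (Det.intEq _ _ _) (Det.intEq _ _ _)

lemma det_chainConj (X : ℕ → S.Var) (k : ℕ) : Det (chainConj X k) := by
  induction k with
  | zero => exact det_leadsTo _ _
  | succ n ih => exact Det.conj ih (det_leadsTo _ _)

/-- The value of a determined formula under a homomorphic valuation only
depends on the atoms. -/
lemma det_ext (v : Form S → Bool)
    (hneg : ∀ ψ : Form S, v (Form.neg ψ) = !(v ψ))
    (hconj : ∀ ψ χ : Form S, v (Form.conj ψ χ) = (v ψ && v χ))
    {φ : Form S} (h : Det φ) :
    v φ = ext (fun I Y y => v (Form.int I (Form.eq Y y))) φ := by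
  induction h with
  | intEq I Y y => rfl
  | contra Y y =>
    rw [hconj, hneg, ext_conj, ext_neg]
    simp [ext]
  | neg _ ih => rw [hneg, ext_neg, ih]
  | conj _ _ ih1 ih2 => rw [hconj, ext_conj, ih1, ih2]

/-- Axiom instances A1–A7. -/
inductive Ax : Form S → Prop where
  | a1 : ∀ (I : Intervention S) (Y : S.Var) (y y' : S.Val Y), y ≠ y' →
      Ax (Form.impl (Form.int I (Form.eq Y y)) (Form.neg (Form.int I (Form.eq Y y'))))
  | a2 : ∀ (I : Intervention S) (Y : S.Var),
      Ax (bigOr (((Finset.univ : Finset (S.Val Y)).toList).map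
        (fun y => Form.int I (Form.eq Y y))))
  | a3 : ∀ (I : Intervention S) (Y Z : S.Var) (y : S.Val Y) (z : S.Val Z),
      Ax (Form.impl (Form.conj (Form.int I (Form.eq Y y)) (Form.int I (Form.eq Z z)))
        (Form.int (iUpd I Y y) (Form.eq Z z)))
  | a4 : ∀ (I : Intervention S) (Y : S.Var) (y : S.Val Y),
      Ax (Form.int (iUpd I Y y) (Form.eq Y y))
  | a5 : ∀ (I : Intervention S) (Y Z : S.Var) (y : S.Val Y) (z : S.Val Z), Y ≠ Z →
      Ax (Form.impl
        (Form.conj (Form.int (iUpd I Y y) (Form.eq Z z)) (Form.int (iUpd I Z z) (Form.eq Y y)))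
        (Form.int I (Form.eq Z z)))
  | a6 : ∀ (X : ℕ → S.Var) (k : ℕ),
      (∀ i : ℕ, i ≤ k → X i ≠ X (i + 1)) → X (k + 1) ≠ X 0 →
      Ax (Form.impl (chainConj X k) (Form.neg (leadsTo (X (k + 1)) (X 0))))
  | a7 : ∀ (I : Intervention S) (U : S.Var) (u : S.Val U), S.exo U → I U = none →
      Ax (Form.iffF (Form.int (iEmpty S) (Form.eq U u)) (Form.int I (Form.eq U u)))

lemma Ax.thm {φ : Form S} (h : Ax φ) : ThmC' φ := by
  cases h with
  | a1 I Y y y' h => exact ThmC'.a1 I Y y y' h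
  | a2 I Y => exact ThmC'.a2 I Y
  | a3 I Y Z y z => exact ThmC'.a3 I Y Z y z
  | a4 I Y y => exact ThmC'.a4 I Y y
  | a5 I Y Z y z h => exact ThmC'.a5 I Y Z y z h
  | a6 X k h1 h2 => exact ThmC'.a6 X k h1 h2
  | a7 I U u h1 h2 => exact ThmC'.a7 I U u h1 h2

lemma Ax.det {φ : Form S} (h : Ax φ) : Det φ := by
  cases h with
  | a1 I Y y y' h => exact det_impl (Det.intEq _ _ _) (Det.neg (Det.intEq _ _ _))
  | a2 I Y =>
    refine det_bigOr fun φ hm => ?_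
    rw [List.mem_map] at hm
    obtain ⟨y, _, rfl⟩ := hm
    exact Det.intEq _ _ _
  | a3 I Y Z y z =>
    exact det_impl (Det.conj (Det.intEq _ _ _) (Det.intEq _ _ _)) (Det.intEq _ _ _)
  | a4 I Y y => exact Det.intEq _ _ _
  | a5 I Y Z y z h =>
    exact det_impl (Det.conj (Det.intEq _ _ _) (Det.intEq _ _ _)) (Det.intEq _ _ _)
  | a6 X k h1 h2 => exact det_impl (det_chainConj _ _) (Det.neg (det_leadsTo _ _))
  | a7 I U u h1 h2 => exact det_iffF (Det.intEq _ _ _) (Det.intEq _ _ _)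

/-- Locality: a structural function is insensitive to coordinates it is not
directly affected by.  -/
lemma locality (F : StructFuns S) (V : S.Var) (hV : ¬ S.exo V) (g₁ g₂ : Others S V)
    (hagree : ∀ W : {X : S.Var // X ≠ V}, DirAff F W.val V → g₁ W = g₂ W) :
    F V g₁ = F V g₂ := by
  have insens : ∀ (W : {X : S.Var // X ≠ V}), ¬ DirAff F W.val V →
      ∀ (q : Others S V) (a b : S.Val W.val),
        F V (Function.update q W a) = F V (Function.update q W b) := by
    intro W hnd q a b
    by_cases hab : a = b
    · rw [hab]
    · rw [DirAff] at hnd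
      push_neg at hnd
      exact hnd hV W.2 q a b hab
  -- hybrid valuations
  have key : ∀ L : List {X : S.Var // X ≠ V},
      F V (fun W => if W ∈ L then g₂ W else g₁ W) = F V g₁ := by
    intro L
    induction L with
    | nil => simp
    | cons X L ih =>
      have hyb_eq : (fun W => if W ∈ X :: L then g₂ W else g₁ W) =
          Function.update (fun W => if W ∈ L then g₂ W else g₁ W) X (g₂ X) := by
        funext W
        rcases eq_or_ne W X with rfl | hW
        · simp [Function.update_self, List.mem_cons]
        · rw [Function.update_of_ne hW]
          simp only [List.mem_cons]
          have : (W = X) = False := by simp [hW]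
          simp [hW]
      rw [hyb_eq]
      by_cases hd : DirAff F X.val V
      · have hx : g₁ X = g₂ X := hagree X hd
        have : Function.update (fun W => if W ∈ L then g₂ W else g₁ W) X (g₂ X) =
            (fun W => if W ∈ L then g₂ W else g₁ W) := by
          funext W
          rcases eq_or_ne W X with rfl | hW
          · rw [Function.update_self]
            by_cases hm : W ∈ L <;> simp [hm, hx.symm]
          · rw [Function.update_of_ne hW]
        rw [this, ih]
      · calc F V (Function.update (fun W => if W ∈ L then g₂ W else g₁ W) X (g₂ X))
            = F V (Function.update (fun W => if W ∈ L then g₂ W else g₁ W) X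
                ((fun W => if W ∈ L then g₂ W else g₁ W) X)) := insens X hd _ _ _
          _ = F V (fun W => if W ∈ L then g₂ W else g₁ W) := by rw [Function.update_eq_self]
          _ = F V g₁ := ih
  have := key (Finset.univ : Finset {X : S.Var // X ≠ V}).toList
  simp only [Finset.mem_toList, Finset.mem_univ, if_true] at this
  exact this.symm

/-- A transitive irreflexive relation on a finite type is well-founded. -/
lemma wf_of_recursive (F : StructFuns S) (hrec : RecursiveF F) :
    WellFounded (Relation.TransGen (DirAff F)) := by
  have : IsTrans S.Var (Relation.TransGen (DirAff F)) := ⟨fun _ _ _ => Relation.TransGen.trans⟩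
  have : IsIrrefl S.Var (Relation.TransGen (DirAff F)) := ⟨fun a h => hrec a a h h⟩
  exact Finite.wellFounded_of_trans_of_irrefl _

/-- Uniqueness of the intervened valuation for recursive models. -/
lemma intervenedVal_unique (F : StructFuns S) (hrec : RecursiveF F) (A : Env S)
    (I : Intervention S) (A' A'' : Env S)
    (h1 : IntervenedVal F A I A') (h2 : IntervenedVal F A I A'') : A' = A'' := by
  funext V
  induction V using (wf_of_recursive F hrec).induction with
  | _ V ih =>
    by_cases hexo : S.exo V
    · cases hIV : I V with
      | none => rw [h1.2.1 V hexo hIV, h2.2.1 V hexo hIV]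
      | some v => rw [h1.1 V hexo v hIV, h2.1 V hexo v hIV]
    · rw [h1.2.2 V hexo, h2.2.2 V hexo]
      cases hIV : I V with
      | some v => simp [intF, hIV]
      | none =>
        simp only [intF, hIV, Option.getD_none]
        refine locality F V hexo _ _ fun W hd => ?_
        exact ih W.val (Relation.TransGen.single hd)

/-- Path extraction from `TransGen`. -/
lemma transGen_path {α : Type*} {r : α → α → Prop} {a b : α}
    (h : Relation.TransGen r a b) :
    ∃ (n : ℕ) (f : ℕ → α), f 0 = a ∧ f (n + 1) = b ∧ ∀ i ≤ n, r (f i) (f (i + 1)) := by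
  induction h with
  | @single c hab =>
    refine ⟨0, fun i => if i = 0 then a else c, by simp, by simp, ?_⟩
    intro i hi
    interval_cases i
    simpa using hab
  | @tail c d hac hcd ih =>
    obtain ⟨n, f, h0, hn, hf⟩ := ih
    refine ⟨n + 1, fun i => if i ≤ n + 1 then f i else d, by simp [h0], by simp, ?_⟩
    intro i hi
    show r (if i ≤ n + 1 then f i else d) (if i + 1 ≤ n + 1 then f (i + 1) else d)
    rcases Nat.lt_or_ge i (n + 1) with hlt | hge
    · rw [if_pos (le_of_lt hlt), if_pos (show i + 1 ≤ n + 1 by omega)]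
      exact hf i (Nat.lt_succ_iff.1 hlt)
    · have hi' : i = n + 1 := le_antisymm hi hge
      subst hi'
      rw [if_pos le_rfl, if_neg (by omega), hn]
      exact hcd

end Aux2
section Canon

attribute [local instance] Classical.propDecidable

variable {S : Sig}

/-- An atomic assignment is consistent if it validates all axiom instances. -/
def Consistent (β : ∀ (I : Intervention S) (Y : S.Var), S.Val Y → Bool) : Prop :=
  ∀ φ : Form S, Ax φ → ext β φ = true

variable (β : ∀ (I : Intervention S) (Y : S.Var), S.Val Y → Bool) (hβ : Consistent β)

include hβ

lemma exu (I : Intervention S) (Y : S.Var) : ∃! y : S.Val Y, β I Y y = true := by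
  have h2 := hβ _ (Ax.a2 I Y)
  rw [v_bigOr (ext β) (ext_neg β) (ext_conj β)] at h2
  obtain ⟨ψ, hm, hv⟩ := h2
  rw [List.mem_map] at hm
  obtain ⟨y, _, rfl⟩ := hm
  rw [ext_intEq] at hv
  refine ⟨y, hv, ?_⟩
  intro y' hy'
  by_contra hne
  have h1 := hβ _ (Ax.a1 I Y y' y hne)
  rw [v_impl (ext β) (ext_neg β) (ext_conj β)] at h1
  have := h1 (by rw [ext_intEq]; exact hy')
  rw [ext_neg, ext_intEq, hv] at this
  simp at this

/-- The canonical valuation associated to each intervention. -/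
noncomputable def Tc (I : Intervention S) : Env S :=
  fun Y => (exu β hβ I Y).exists.choose

lemma Tc_spec (I : Intervention S) (Y : S.Var) : β I Y (Tc β hβ I Y) = true :=
  (exu β hβ I Y).exists.choose_spec

lemma Tc_eq {I : Intervention S} {Y : S.Var} {y : S.Val Y} (h : β I Y y = true) :
    Tc β hβ I Y = y :=
  (exu β hβ I Y).unique (Tc_spec β hβ I Y) h

lemma Tc_iff {I : Intervention S} {Y : S.Var} {y : S.Val Y} :
    β I Y y = true ↔ Tc β hβ I Y = y :=
  ⟨Tc_eq β hβ, fun h => h ▸ Tc_spec β hβ I Y⟩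

lemma Tc_upd (I : Intervention S) (Y : S.Var) (y : S.Val Y) :
    Tc β hβ (iUpd I Y y) Y = y := by
  have h4 := hβ _ (Ax.a4 I Y y)
  rw [ext_intEq] at h4
  exact Tc_eq β hβ h4

lemma Tc_some {I : Intervention S} {Y : S.Var} {y : S.Val Y} (h : I Y = some y) :
    Tc β hβ I Y = y := by
  have hI : iUpd I Y y = I := by
    rw [iUpd, ← h, Function.update_eq_self]
  rw [← hI]
  exact Tc_upd β hβ I Y y

lemma Tc_step (J : Intervention S) (W : S.Var) :
    Tc β hβ (iUpd J W (Tc β hβ J W)) = Tc β hβ J := by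
  funext Z
  have h3 := hβ _ (Ax.a3 J W Z (Tc β hβ J W) (Tc β hβ J Z))
  rw [v_impl (ext β) (ext_neg β) (ext_conj β)] at h3
  have := h3 (by rw [ext_conj, ext_intEq, ext_intEq, Tc_spec β hβ J W, Tc_spec β hβ J Z]; rfl)
  rw [ext_intEq] at this
  exact Tc_eq β hβ this

/-- Flooding: impose the canonical values of `I` on a list of variables. -/
noncomputable def flood (I J : Intervention S) (L : List S.Var) : Intervention S :=
  L.foldl (fun J W => iUpd J W (Tc β hβ I W)) J

lemma flood_T (I : Intervention S) : ∀ (L : List S.Var) (J : Intervention S),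
    Tc β hβ J = Tc β hβ I → Tc β hβ (flood β hβ I J L) = Tc β hβ I := by
  intro L
  induction L with
  | nil => intro J h; exact h
  | cons W L ih =>
    intro J h
    refine ih _ ?_
    show Tc β hβ (iUpd J W (Tc β hβ I W)) = Tc β hβ I
    rw [show Tc β hβ I W = Tc β hβ J W from (congrFun h W).symm, Tc_step β hβ J W, h]

lemma flood_val (I : Intervention S) : ∀ (L : List S.Var) (J : Intervention S) (Z : S.Var),
    flood β hβ I J L Z = if Z ∈ L then some (Tc β hβ I Z) else J Z := by
  intro L
  induction L with
  | nil => intro J Z; simp [flood]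
  | cons W L ih =>
    intro J Z
    rw [show flood β hβ I J (W :: L) = flood β hβ I (iUpd J W (Tc β hβ I W)) L from rfl, ih]
    by_cases hZ : Z ∈ L
    · simp [hZ, List.mem_cons]
    · rcases eq_or_ne Z W with rfl | hZW
      · simp [hZ, iUpd, List.mem_cons]
      · have : ¬ Z ∈ W :: L := by simp [List.mem_cons, hZ, hZW]
        simp only [hZ, if_false, this, iUpd]
        rw [Function.update_of_ne hZW]

/-- The full intervention fixing all variables other than `V` to the values of `g`. -/
noncomputable def fullI (V : S.Var) (g : Others S V) : Intervention S := fun W =>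
  if h : W = V then none else some (g ⟨W, h⟩)

lemma Fkey (I : Intervention S) (V : S.Var) (hV : I V = none) :
    Tc β hβ (fullI V ((Tc β hβ I).restrict V)) = Tc β hβ I := by
  have hL : fullI V ((Tc β hβ I).restrict V) =
      flood β hβ I I ((Finset.univ : Finset S.Var).toList.filter (fun W => W ≠ V)) := by
    funext Z
    rw [flood_val]
    by_cases hZ : Z = V
    · have hmem : ¬ Z ∈ (Finset.univ : Finset S.Var).toList.filter (fun W => W ≠ V) := by
        simp [List.mem_filter, hZ]
      rw [if_neg hmem]
      simp only [fullI]
      rw [dif_pos hZ, hZ, hV]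
    · have hmem : Z ∈ (Finset.univ : Finset S.Var).toList.filter (fun W => W ≠ V) := by
        simp [List.mem_filter, hZ, Finset.mem_toList]
      rw [if_pos hmem]
      simp only [fullI]
      rw [dif_neg hZ]
      rfl
  rw [hL]
  exact flood_T β hβ I _ I rfl

/-- The canonical structural functions. -/
noncomputable def Fc : StructFuns S := fun V g => Tc β hβ (fullI V g) V

/-- The canonical actual valuation. -/
noncomputable def Ac : Env S := Tc β hβ (iEmpty S)

lemma Ac_complies : Complies (Fc β hβ) (Ac β hβ) := by
  intro V _
  exact (congrFun (Fkey β hβ (iEmpty S) V rfl) V).symm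

lemma Tc_intervened (I : Intervention S) :
    IntervenedVal (Fc β hβ) (Ac β hβ) I (Tc β hβ I) := by
  refine ⟨?_, ?_, ?_⟩
  · intro X _ v hIX
    exact Tc_some β hβ hIX
  · intro X hexo hIX
    have h7 := hβ _ (Ax.a7 I X (Tc β hβ I X) hexo hIX)
    rw [v_iffF (ext β) (ext_neg β) (ext_conj β), ext_intEq, ext_intEq] at h7
    have : β (iEmpty S) X (Tc β hβ I X) = true := h7.2 (Tc_spec β hβ I X)
    exact (Tc_eq β hβ this).symm
  · intro V _
    show Tc β hβ I V = (I V).getD (Fc β hβ V ((Tc β hβ I).restrict V))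
    cases hIV : I V with
    | some v => simp [Tc_some β hβ hIV]
    | none =>
      simp only [Option.getD_none]
      exact (congrFun (Fkey β hβ I V hIV) V).symm

omit hβ in
lemma DirAff.ne {F : StructFuns S} {X V : S.Var} (h : DirAff F X V) : X ≠ V := by
  obtain ⟨-, h, -⟩ := h
  exact h

lemma dirAff_leadsTo {X V : S.Var} (h : DirAff (Fc β hβ) X V) :
    ext β (leadsTo X V) = true := by
  obtain ⟨hexo, hXV, g, x₁, x₂, hx, hne⟩ := h
  rw [v_leadsTo (ext β) (ext_neg β) (ext_conj β)]
  set g' : ∀ W : {W : S.Var // W ≠ X ∧ W ≠ V}, S.Val W.val := fun W => g ⟨W.1, W.2.2⟩ with hg'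
  have key : ∀ x : S.Val X, fullI V (Function.update g ⟨X, hXV⟩ x) = ltInt X V g' x := by
    intro x
    funext W
    rw [fullI, ltInt]
    rcases eq_or_ne W X with rfl | hWX
    · rw [dif_neg hXV, dif_pos rfl]
      rw [Function.update_self]
    · rw [dif_neg hWX]
      rcases eq_or_ne W V with rfl | hWV
      · rw [dif_pos rfl, dif_pos rfl]
      · rw [dif_neg hWV, dif_neg hWV]
        rw [Function.update_of_ne (by simp [hWX])]
  refine ⟨g', x₁, x₂, Tc β hβ (ltInt X V g' x₁) V, Tc β hβ (ltInt X V g' x₂) V, hx, ?_,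
    by rw [ext_intEq]; exact Tc_spec β hβ _ _, by rw [ext_intEq]; exact Tc_spec β hβ _ _⟩
  rw [← key x₁, ← key x₂]
  exact hne

lemma Fc_recursive : RecursiveF (Fc β hβ) := by
  intro a b hab hba
  obtain ⟨n, f, hf0, hfn, hf⟩ := transGen_path hab
  obtain ⟨m, g, hg0, hgm, hg⟩ := transGen_path hba
  set X : ℕ → S.Var := fun i => if i ≤ n + 1 then f i else g (i - (n + 1)) with hX
  have hX0 : X 0 = a := by simp [hX, hf0]
  have hXlast : X (n + m + 2) = X 0 := by
    rw [hX0]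
    show (if n + m + 2 ≤ n + 1 then f (n + m + 2) else g (n + m + 2 - (n + 1))) = a
    rw [if_neg (by omega), show n + m + 2 - (n + 1) = m + 1 from by omega, hgm]
  have hXedge : ∀ i ≤ n + m + 1, DirAff (Fc β hβ) (X i) (X (i + 1)) := by
    intro i hi
    rcases Nat.lt_or_ge i (n + 1) with hlt | hge
    · have e1 : X i = f i := by simp [hX, le_of_lt hlt]
      have e2 : X (i + 1) = f (i + 1) := by simp [hX, Nat.succ_le_of_lt hlt]
      rw [e1, e2]
      exact hf i (Nat.lt_succ_iff.1 hlt)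
    · have e2 : X (i + 1) = g (i + 1 - (n + 1)) := by
        show (if i + 1 ≤ n + 1 then f (i + 1) else g (i + 1 - (n + 1))) = _
        rw [if_neg (by omega)]
      have e1 : X i = g (i - (n + 1)) := by
        show (if i ≤ n + 1 then f i else g (i - (n + 1))) = _
        rcases eq_or_lt_of_le hge with heq | hlt
        · rw [if_pos (by omega), show i = n + 1 from heq.symm, hfn, ← hg0]
          rw [show n + 1 - (n + 1) = 0 from by omega]
        · rw [if_neg (by omega)]
      rw [e1, e2, show i + 1 - (n + 1) = (i - (n + 1)) + 1 from by omega]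
      exact hg (i - (n + 1)) (by omega)
  have hchain : ext β (chainConj X (n + m)) = true :=
    (v_chainConj (ext β) (ext_neg β) (ext_conj β) X (n + m)).2
      fun i hi => dirAff_leadsTo β hβ (hXedge i (by omega))
  have hlastEdge : DirAff (Fc β hβ) (X (n + m + 1)) (X 0) := by
    have := hXedge (n + m + 1) le_rfl
    rwa [show n + m + 1 + 1 = n + m + 2 from rfl, hXlast] at this
  have hlast : ext β (leadsTo (X (n + m + 1)) (X 0)) = true := dirAff_leadsTo β hβ hlastEdge
  have h6 := hβ _ (Ax.a6 X (n + m) (fun i hi => (hXedge i (by omega)).ne) hlastEdge.ne)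
  rw [v_impl (ext β) (ext_neg β) (ext_conj β)] at h6
  have := h6 hchain
  rw [ext_neg, hlast] at this
  simp at this

lemma intVal_eq (I : Intervention S) :
    intVal (Fc β hβ) (Ac β hβ) I = Tc β hβ I := by
  have hex : ∃ A', IntervenedVal (Fc β hβ) (Ac β hβ) I A' := ⟨_, Tc_intervened β hβ I⟩
  have hspec := Classical.epsilon_spec hex
  exact intervenedVal_unique _ (Fc_recursive β hβ) _ I _ _ hspec (Tc_intervened β hβ I)

lemma truth {φ : Form S} (h : IsC' φ) :
    SatC φ (Fc β hβ) (Ac β hβ) ↔ ext β φ = true := by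
  induction h with
  | intEq I Y y =>
    show intVal (Fc β hβ) (Ac β hβ) I Y = y ↔ _
    rw [intVal_eq β hβ I, ext_intEq]
    exact (Tc_iff β hβ).symm
  | neg _ ih =>
    show ¬ _ ↔ _
    rw [ext_neg, ih]
    simp
  | conj _ _ ih1 ih2 =>
    show _ ∧ _ ↔ _
    rw [ext_conj, ih1, ih2]
    simp

end Canon
section Main

attribute [local instance] Classical.propDecidable

variable {S : Sig}

lemma impsFrom_append (l₁ l₂ : List (Form S)) (φ : Form S) :
    impsFrom (l₁ ++ l₂) φ = impsFrom l₁ (impsFrom l₂ φ) := by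
  induction l₁ with
  | nil => rfl
  | cons a l ih => rw [List.cons_append, impsFrom, impsFrom, ih]

lemma discharge {l : List (Form S)} {φ : Form S} (hthm : ∀ θ ∈ l, ThmC' θ)
    (h : ThmC' (impsFrom l φ)) : ThmC' φ := by
  induction l with
  | nil => exact h
  | cons a l ih =>
    exact ih (fun θ hm => hthm θ (List.mem_cons_of_mem a hm))
      (ThmC'.mp h (hthm a (List.mem_cons_self)))

end Main
attribute [local instance] Classical.propDecidable

/-- Theorem: the proof system L′_C is strongly complete for the language L′_C with
respect to recursive causal models. -/
theorem LC'_strongly_complete (S : Sig) (Γ : Set (Form S)) (γ : Form S)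
    (hΓ : ∀ ψ ∈ Γ, IsC' ψ) (hγ : IsC' γ)
    (hsem : ∀ (F : StructFuns S) (A : Env S), RecursiveF F → Complies F A →
      (∀ ψ ∈ Γ, SatC ψ F A) → SatC γ F A) :
    ProvC' Γ γ := by
  have main : ∀ β : ∀ (I : Intervention S) (Y : S.Var), S.Val Y → Bool,
      Consistent β → (∀ ψ ∈ Γ, ext β ψ = true) → ext β γ = true := by
    intro β hcon hsat
    have := hsem (Fc β hcon) (Ac β hcon) (Fc_recursive β hcon) (Ac_complies β hcon)
      (fun ψ hψ => (truth β hcon (hΓ ψ hψ)).2 (hsat ψ hψ))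
    exact (truth β hcon hγ).1 this
  have hwitA : ∀ β : ∀ (I : Intervention S) (Y : S.Var), S.Val Y → Bool,
      ¬ Consistent β → ∃ θ, Ax θ ∧ ext β θ = false := by
    intro β h
    rw [Consistent] at h
    push_neg at h
    obtain ⟨θ, hax, hne⟩ := h
    exact ⟨θ, hax, by simpa using hne⟩
  have hwitG : ∀ β : ∀ (I : Intervention S) (Y : S.Var), S.Val Y → Bool,
      ¬ (∀ ψ ∈ Γ, ext β ψ = true) → ∃ ψ, ψ ∈ Γ ∧ ext β ψ = false := by
    intro β h
    push_neg at h
    obtain ⟨ψ, hψ, hne⟩ := h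
    exact ⟨ψ, hψ, by simpa using hne⟩
  let Bs : List (∀ (I : Intervention S) (Y : S.Var), S.Val Y → Bool) :=
    (Finset.univ : Finset _).toList
  let Θ : List (Form S) := Bs.filterMap (fun β =>
    if h : Consistent β then none else some (hwitA β h).choose)
  let L : List (Form S) := Bs.filterMap (fun β =>
    if h : Consistent β then
      (if h2 : ∀ ψ ∈ Γ, ext β ψ = true then none else some (hwitG β h2).choose)
    else none)
  have htaut : Tauto (impsFrom (Θ ++ L) γ) := by
    intro v hneg hconj
    rw [v_impsFrom v hneg hconj]
    intro hall
    set β : ∀ (I : Intervention S) (Y : S.Var), S.Val Y → Bool :=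
      fun I Y y => v (Form.int I (Form.eq Y y)) with hb
    have hext : ∀ {φ : Form S}, Det φ → v φ = ext β φ :=
      fun h => det_ext v hneg hconj h
    by_cases hcon : Consistent β
    · by_cases hsat : ∀ ψ ∈ Γ, ext β ψ = true
      · rw [hext hγ.det]
        exact main β hcon hsat
      · have hmem : (hwitG β hsat).choose ∈ L := by
          refine List.mem_filterMap.2 ⟨β, Finset.mem_toList.2 (Finset.mem_univ β), ?_⟩
          rw [dif_pos hcon, dif_neg hsat]
        have hv := hall _ (List.mem_append_right Θ hmem)
        obtain ⟨hψΓ, hfalse⟩ := (hwitG β hsat).choose_spec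
        rw [hext ((hΓ _ hψΓ).det)] at hv
        rw [hv] at hfalse
        cases hfalse
    · have hmem : (hwitA β hcon).choose ∈ Θ := by
        refine List.mem_filterMap.2 ⟨β, Finset.mem_toList.2 (Finset.mem_univ β), ?_⟩
        rw [dif_neg hcon]
      have hv := hall _ (List.mem_append_left L hmem)
      obtain ⟨hax, hfalse⟩ := (hwitA β hcon).choose_spec
      rw [hext hax.det] at hv
      rw [hv] at hfalse
      cases hfalse
  have hthm : ThmC' (impsFrom (Θ ++ L) γ) := ThmC'.taut htaut
  rw [impsFrom_append] at hthm
  have hΘ : ∀ θ ∈ Θ, ThmC' θ := by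
    intro θ hm
    obtain ⟨β, -, hbm⟩ := List.mem_filterMap.1 hm
    by_cases h : Consistent β
    · rw [dif_pos h] at hbm
      cases hbm
    · rw [dif_neg h] at hbm
      rw [Option.some_inj] at hbm
      rw [← hbm]
      exact ((hwitA β h).choose_spec.1).thm
  have hLΓ : ∀ ψ ∈ L, ψ ∈ Γ := by
    intro ψ hm
    obtain ⟨β, -, hbm⟩ := List.mem_filterMap.1 hm
    by_cases h : Consistent β
    · rw [dif_pos h] at hbm
      by_cases h2 : ∀ ψ ∈ Γ, ext β ψ = true
      · rw [dif_pos h2] at hbm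
        cases hbm
      · rw [dif_neg h2] at hbm
        rw [Option.some_inj] at hbm
        rw [← hbm]
        exact (hwitG β h2).choose_spec.1
    · rw [dif_neg h] at hbm
      cases hbm
  exact ⟨L, hLΓ, discharge hΘ hthm⟩
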